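/- arXiv:math/0503047 — 5 statements merged into one kernel-verified Lean document; each statement's English description precedes it below -/
import Mathlib

section
/- Let β be a Pisot number (a real algebraic integer β > 1 all of whose other Galois conjugates lie in the open unit disc of ℂ). If the number field ℚ(β) is not totally real, then the field ℚ(β + β⁻¹) is not totally real. -/
/-- A Pisot number: a real algebraic integer `β > 1` all of whose Galois conjugates
(roots of its minimal polynomial over `ℚ`) other than `β` itself lie in the open unit disc. -/
def IsPisot (β : ℝ) : Prop :=
  IsIntegral ℤ β ∧ 1 < β ∧
    ∀ z : ℂ, Polynomial.aeval z (minpoly ℚ β) = 0 → z ≠ (β : ℂ) → ‖z‖ < 1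

/-- For a real algebraic number `x`, the field `ℚ(x)` is totally real iff every complex
root of the minimal polynomial of `x` over `ℚ` (i.e. every embedding of `ℚ(x)` into `ℂ`)
is real. -/
def AdjoinIsTotallyReal (x : ℝ) : Prop :=
  ∀ z : ℂ, Polynomial.aeval z (minpoly ℚ x) = 0 → z.im = 0

open Polynomial

/-- If `m` vanishes at `w` and has nonzero constant coefficient, the explicit polynomial
`C (-(m.coeff 0)⁻¹) * m.divX` evaluates at `w` to `w⁻¹`. -/
lemma aux_inv {K : Type*} [Field K] [Algebra ℚ K] (m : ℚ[X]) (w : K)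
    (hw : Polynomial.aeval w m = 0) (h0 : m.coeff 0 ≠ 0) :
    Polynomial.aeval w (Polynomial.C (-(m.coeff 0)⁻¹) * m.divX) = w⁻¹ := by
  have hh : Polynomial.aeval w (Polynomial.X * m.divX + Polynomial.C (m.coeff 0)) = 0 := by
    rw [Polynomial.X_mul_divX_add m, hw]
  rw [map_add, map_mul, aeval_X, aeval_C] at hh
  have ha0 : algebraMap ℚ K (m.coeff 0) ≠ 0 := fun hz =>
    h0 ((algebraMap ℚ K).injective (by rw [hz, map_zero]))
  have hw0 : w ≠ 0 := by
    rintro rfl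
    apply ha0
    linear_combination hh
  symm
  apply inv_eq_of_mul_eq_one_right
  rw [map_mul, aeval_C, map_neg, map_inv₀]
  have h2 : w * Polynomial.aeval w m.divX = -(algebraMap ℚ K (m.coeff 0)) := by
    linear_combination hh
  calc w * (-(algebraMap ℚ K (m.coeff 0))⁻¹ * Polynomial.aeval w m.divX)
      = -(algebraMap ℚ K (m.coeff 0))⁻¹ * (w * Polynomial.aeval w m.divX) := by ring
    _ = -(algebraMap ℚ K (m.coeff 0))⁻¹ * -(algebraMap ℚ K (m.coeff 0)) := by rw [h2]
    _ = 1 := by rw [neg_mul_neg, inv_mul_cancel₀ ha0]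

theorem pisot_not_totallyReal_add_inv (β : ℝ) (hβ : IsPisot β)
    (h : ¬ AdjoinIsTotallyReal β) : ¬ AdjoinIsTotallyReal (β + β⁻¹) := by
  obtain ⟨hint, hβ1, hconj⟩ := hβ
  have hβQ : IsIntegral ℚ β := hint.tower_top
  have hβ0 : β ≠ 0 := by positivity
  simp only [AdjoinIsTotallyReal, not_forall] at h
  obtain ⟨z, hz0, hzim⟩ := h
  set m := minpoly ℚ β with hm
  have key : ∀ p : ℚ[X], Polynomial.aeval β p = 0 → Polynomial.aeval z p = 0 := by
    intro p hp
    obtain ⟨q, hq⟩ := minpoly.dvd ℚ β hp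
    rw [hq, map_mul, ← hm, hz0, zero_mul]
  have hc0 : m.coeff 0 ≠ 0 := minpoly.coeff_zero_ne_zero hβQ hβ0
  set r : ℚ[X] := Polynomial.C (-(m.coeff 0)⁻¹) * m.divX with hr
  have hrβ : Polynomial.aeval β r = β⁻¹ := aux_inv m β (minpoly.aeval ℚ β) hc0
  have hrz : Polynomial.aeval z r = z⁻¹ := aux_inv m z hz0 hc0
  have hz0' : z ≠ 0 := by
    rintro rfl
    apply hc0
    simpa [Polynomial.aeval_def, Polynomial.eval₂_at_zero] using hz0
  set p : ℚ[X] := (minpoly ℚ (β + β⁻¹)).comp (Polynomial.X + r) with hp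
  have hpβ : Polynomial.aeval β p = 0 := by
    rw [hp, aeval_comp, map_add, aeval_X, hrβ, minpoly.aeval]
  have hpz : Polynomial.aeval (z + z⁻¹) (minpoly ℚ (β + β⁻¹)) = 0 := by
    have h' := key p hpβ
    rwa [hp, aeval_comp, map_add, aeval_X, hrz] at h'
  intro H
  have him := H (z + z⁻¹) hpz
  have habs : ‖z‖ < 1 := by
    apply hconj z hz0
    intro he
    rw [he] at hzim
    simp at hzim
  have hns : Complex.normSq z < 1 := by
    have hsq := Complex.sq_norm z
    nlinarith [norm_nonneg z]
  have hns0 : 0 < Complex.normSq z := Complex.normSq_pos.mpr hz0'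
  rw [Complex.add_im, Complex.inv_im] at him
  apply hzim
  have hmul : z.im * (1 - 1 / Complex.normSq z) = 0 := by
    field_simp at him ⊢
    linarith [him]
  rcases mul_eq_zero.mp hmul with h' | h'
  · exact h'
  · exfalso
    have hgt : 1 < 1 / Complex.normSq z := by
      rw [lt_div_iff₀ hns0]; linarith
    linarith
end

section
/- For every integer n ≥ 2, the polynomial Pₙ(X) = Xⁿ − X^{n−1} − X^{n−2} − ⋯ − X − 1 has exactly 2 real roots if n is even and exactly 1 real root if n is odd. -/
open Polynomial Finset

theorem real_roots_count_P (n : ℕ) (hn : 2 ≤ n) :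
    {x : ℝ | ((X : ℝ[X]) ^ n - ∑ i ∈ Finset.range n, (X : ℝ[X]) ^ i).eval x = 0}.ncard
      = if Even n then 2 else 1 := by
  have hn2 : (2:ℝ) ≤ (n:ℝ) := by exact_mod_cast hn
  set f : ℝ → ℝ := fun x => x ^ n - ∑ i ∈ Finset.range n, x ^ i with hf_def
  have hsets : {x : ℝ | ((X : ℝ[X]) ^ n - ∑ i ∈ Finset.range n, (X : ℝ[X]) ^ i).eval x = 0}
      = {x | f x = 0} := by
    ext x; simp [hf_def, Polynomial.eval_finset_sum]
  rw [hsets]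
  set Q : ℝ → ℝ := fun x => x ^ (n+1) - 2 * x ^ n + 1 with hQ_def
  set c : ℝ := 2 * n / (n + 1) with hc_def
  have hnp : (0:ℝ) < (n:ℝ) + 1 := by linarith
  have h1c : 1 < c := by
    rw [hc_def, lt_div_iff₀ hnp]; linarith
  have hQf : ∀ x : ℝ, (x - 1) * f x = Q x := by
    intro x
    have h : (∑ i ∈ Finset.range n, x ^ i) * (x - 1) = x ^ n - 1 := geom_sum_mul x n
    simp only [hf_def, hQ_def]
    linear_combination -h
  have hf1 : f 1 = 1 - n := by simp [hf_def]
  have hQ1 : Q 1 = 0 := by norm_num [hQ_def]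
  have hroot_iff : ∀ x : ℝ, f x = 0 ↔ Q x = 0 ∧ x ≠ 1 := by
    intro x
    constructor
    · intro hx
      refine ⟨by rw [← hQf x, hx, mul_zero], ?_⟩
      rintro rfl
      rw [hf1] at hx; linarith
    · rintro ⟨hQx, hx1⟩
      have := hQf x
      rw [hQx] at this
      rcases mul_eq_zero.mp this with h | h
      · exact absurd (by linarith : x = 1) hx1
      · exact h
  -- derivative of Q
  have hQd : ∀ x : ℝ, HasDerivAt Q (x ^ (n-1) * (((n:ℝ)+1) * x - 2*n)) x := by
    intro x
    have h1 : HasDerivAt (fun x : ℝ => x ^ (n+1)) (((n:ℝ)+1) * x ^ n) x := by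
      have := hasDerivAt_pow (n+1) x
      simpa using this
    have h2 : HasDerivAt (fun x : ℝ => 2 * x ^ n) (2 * ((n:ℝ) * x ^ (n-1))) x := by
      exact (hasDerivAt_pow n x).const_mul 2
    have h3 := (h1.sub h2).add_const 1
    refine h3.congr_deriv ?_
    have hx : x ^ n = x ^ (n-1) * x := by
      rw [← pow_succ]; congr 1; omega
    rw [hx]; ring
  have hQc : Continuous Q := by
    simp only [hQ_def]; continuity
  have hfc : Continuous f := by
    simp only [hf_def]
    exact (continuous_pow n).sub (continuous_finset_sum _ (fun i _ => continuous_pow i))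
  -- Q strictly decreasing on [0, c]
  have hanti : StrictAntiOn Q (Set.Icc 0 c) := by
    apply strictAntiOn_of_deriv_neg (convex_Icc 0 c) hQc.continuousOn
    intro x hx
    rw [interior_Icc] at hx
    rw [(hQd x).deriv]
    apply mul_neg_of_pos_of_neg
    · exact pow_pos hx.1 _
    · have h2 := hx.2
      rw [hc_def, lt_div_iff₀ hnp] at h2
      linarith
  -- Q strictly increasing on [c, ∞)
  have hmono : StrictMonoOn Q (Set.Ici c) := by
    apply strictMonoOn_of_deriv_pos (convex_Ici c) hQc.continuousOn
    intro x hx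
    rw [interior_Ici] at hx
    rw [(hQd x).deriv]
    have hx0 : (0:ℝ) < x := by
      have := Set.mem_Ioi.mp hx; linarith
    apply mul_pos (pow_pos hx0 _)
    have h2 := Set.mem_Ioi.mp hx
    rw [hc_def, div_lt_iff₀ hnp] at h2
    linarith
  -- root b in (1, 2)
  have hf2 : f 2 = 1 := by
    simp only [hf_def]
    rw [geom_sum_eq (by norm_num : (2:ℝ) ≠ 1) n]
    norm_num
  obtain ⟨b, hb, hfb⟩ : ∃ b ∈ Set.Ioo (1:ℝ) 2, f b = 0 := by
    have hsub := intermediate_value_Ioo (by norm_num : (1:ℝ) ≤ 2) hfc.continuousOn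
    have h0 : (0:ℝ) ∈ Set.Ioo (f 1) (f 2) := by
      rw [hf1, hf2]; constructor
      · linarith
      · norm_num
    obtain ⟨b, hb, hfb⟩ := hsub h0
    exact ⟨b, hb, hfb⟩
  have hQb : Q b = 0 := ((hroot_iff b).mp hfb).1
  have hbc : c < b := by
    by_contra h
    push_neg at h
    have hbm : b ∈ Set.Icc (0:ℝ) c := ⟨by linarith [hb.1], h⟩
    have h1m : (1:ℝ) ∈ Set.Icc (0:ℝ) c := ⟨by norm_num, h1c.le⟩
    have := hanti h1m hbm hb.1
    rw [hQ1, hQb] at this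
    exact lt_irrefl 0 this
  -- uniqueness of positive root
  have huniq : ∀ x : ℝ, f x = 0 → 0 < x → x = b := by
    intro x hfx hx0
    obtain ⟨hQx, hx1⟩ := (hroot_iff x).mp hfx
    rcases le_or_gt x c with h | h
    · exact absurd (hanti.injOn ⟨hx0.le, h⟩ ⟨by norm_num, h1c.le⟩ (by rw [hQx, hQ1])) hx1
    · exact hmono.injOn (Set.mem_Ici.mpr h.le) (Set.mem_Ici.mpr hbc.le) (by rw [hQx, hQb])
  rcases Nat.even_or_odd n with hev | hodd
  · -- even case: two roots
    rw [if_pos hev]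
    have hfm1 : f (-1) = 1 := by
      simp only [hf_def, neg_one_geom_sum, if_pos hev, Even.neg_one_pow hev]
      norm_num
    have hf0 : f 0 = -1 := by
      simp only [hf_def]
      rw [geom_sum_eq (by norm_num : (0:ℝ) ≠ 1), zero_pow (by omega : n ≠ 0)]
      norm_num
    obtain ⟨a, ha, hfa⟩ : ∃ a ∈ Set.Ioo (-1:ℝ) 0, f a = 0 := by
      have hsub := intermediate_value_Ioo' (by norm_num : (-1:ℝ) ≤ 0) hfc.continuousOn
      have h0 : (0:ℝ) ∈ Set.Ioo (f 0) (f (-1)) := by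
        rw [hf0, hfm1]; constructor <;> norm_num
      obtain ⟨a, ha, hfa⟩ := hsub h0
      exact ⟨a, ha, hfa⟩
    have hQa : Q a = 0 := ((hroot_iff a).mp hfa).1
    -- Q strictly increasing on (-∞, 0]
    have hmono_neg : StrictMonoOn Q (Set.Iic 0) := by
      apply strictMonoOn_of_deriv_pos (convex_Iic 0) hQc.continuousOn
      intro x hx
      rw [interior_Iic] at hx
      rw [(hQd x).deriv]
      have hx0 : x < 0 := Set.mem_Iio.mp hx
      have hodd1 : Odd (n - 1) := Nat.Even.sub_odd (by omega) hev odd_one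
      apply mul_pos_of_neg_of_neg
      · exact Odd.pow_neg hodd1 hx0
      · nlinarith
    have hset2 : {x : ℝ | f x = 0} = {a, b} := by
      ext x
      simp only [Set.mem_setOf_eq, Set.mem_insert_iff, Set.mem_singleton_iff]
      constructor
      · intro hx
        obtain ⟨hQx, hx1⟩ := (hroot_iff x).mp hx
        rcases le_or_gt x 0 with h | h
        · left
          exact hmono_neg.injOn (Set.mem_Iic.mpr h) (Set.mem_Iic.mpr ha.2.le) (by rw [hQx, hQa])
        · right; exact huniq x hx h
      · rintro (rfl | rfl) <;> assumption
    rw [hset2, Set.ncard_pair (by linarith [ha.2, hb.1] : a ≠ b)]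
  · -- odd case: one root
    rw [if_neg (Nat.not_even_iff_odd.mpr hodd)]
    have hset1 : {x : ℝ | f x = 0} = {b} := by
      ext x
      simp only [Set.mem_setOf_eq, Set.mem_singleton_iff]
      constructor
      · intro hx
        obtain ⟨hQx, hx1⟩ := (hroot_iff x).mp hx
        rcases le_or_gt x 0 with h | h
        · exfalso
          have h1 : x ^ n ≤ 0 := Odd.pow_nonpos hodd h
          have h2 : (0:ℝ) ≤ x ^ (n+1) := Even.pow_nonneg (Odd.add_one hodd) x
          simp only [hQ_def] at hQx
          nlinarith
        · exact huniq x hx h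
      · rintro rfl; exact hfb
    rw [hset1, Set.ncard_singleton]
end

section
/- For n ≥ 3, the unique real root λₙ > 1 of Xⁿ = X^{n−1} + X^{n−2} + ⋯ + X + 1 is a Pisot number: every other complex root of this polynomial has absolute value strictly less than 1. -/
open Finset

/-- If `x > 1` satisfies `x^n = ∑_{i<n} x^i`, then `∑_{i<n} (x⁻¹)^(i+1) = 1`. -/
lemma aux_inv_sum_eq_one (n : ℕ) (x : ℝ) (hx : 1 < x)
    (h : x ^ n = ∑ i ∈ Finset.range n, x ^ i) :
    ∑ i ∈ Finset.range n, (x⁻¹) ^ (i + 1) = 1 := by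
  have hx0 : (0:ℝ) < x := lt_trans one_pos hx
  have hxne : x ≠ 0 := ne_of_gt hx0
  have hxn : (0:ℝ) < x ^ n := pow_pos hx0 n
  have hrefl : ∑ i ∈ Finset.range n, x ^ (n - 1 - i) = ∑ i ∈ Finset.range n, x ^ i :=
    Finset.sum_range_reflect (fun i => x ^ i) n
  have key : ∀ i ∈ Finset.range n, (x⁻¹) ^ (i + 1) = x ^ (n - 1 - i) / x ^ n := by
    intro i hi
    have hi' : i < n := Finset.mem_range.mp hi
    have hpow : x ^ (n - 1 - i) * x ^ (i + 1) = x ^ n := by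
      rw [← pow_add]; congr 1; omega
    rw [eq_div_iff (ne_of_gt hxn), ← hpow, inv_pow, mul_comm (x ^ (n - 1 - i)), ← mul_assoc,
      inv_mul_cancel₀ (pow_ne_zero _ hxne), one_mul]
  rw [Finset.sum_congr rfl key, ← Finset.sum_div, hrefl, ← h, div_self (ne_of_gt hxn)]

theorem arnoux_yoccoz_root_is_pisot (n : ℕ) (hn : 3 ≤ n)
    (lam : ℝ) (hlam : 1 < lam) (hroot : lam ^ n = ∑ i ∈ Finset.range n, lam ^ i) :
    ∀ z : ℂ, z ^ n = ∑ i ∈ Finset.range n, z ^ i → z ≠ (lam : ℂ) → ‖z‖ < 1 := by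
  intro z hz hzlam
  by_contra hcon
  push_neg at hcon
  set r : ℝ := ‖z‖ with hr
  have hr1 : 1 ≤ r := hcon
  have hr0 : (0:ℝ) < r := lt_of_lt_of_le one_pos hr1
  have hrn : (0:ℝ) < r ^ n := pow_pos hr0 n
  -- z^(n+1) + 1 = 2 z^n
  have h2 : z ^ (n + 1) + 1 = 2 * z ^ n := by
    have hg := geom_sum_mul z n
    linear_combination (z - 1) * hz + hg
  -- r^n ≤ ∑ r^i
  have hB : r ^ n ≤ ∑ i ∈ Finset.range n, r ^ i := by
    calc r ^ n = ‖z ^ n‖ := by rw [norm_pow]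
    _ = ‖∑ i ∈ Finset.range n, z ^ i‖ := by rw [hz]
    _ ≤ ∑ i ∈ Finset.range n, ‖z ^ i‖ := norm_sum_le _ _
    _ = ∑ i ∈ Finset.range n, r ^ i := by simp [norm_pow, hr]
  -- r^(n+1) + 1 ≤ 2 r^n
  have hB2 : r ^ (n + 1) + 1 ≤ 2 * r ^ n := by
    have hg := geom_sum_mul r n
    have h1 : (r - 1) * (r ^ n) ≤ (∑ i ∈ Finset.range n, r ^ i) * (r - 1) := by
      nlinarith
    have hp : r ^ (n + 1) = r ^ n * r := pow_succ r n
    nlinarith [h1, hg, hp]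
  -- 2 r^n ≤ r^(n+1) + 1
  have hA : 2 * r ^ n ≤ r ^ (n + 1) + 1 := by
    have hle : ‖z ^ (n + 1) + 1‖ ≤ r ^ (n + 1) + 1 := by
      calc ‖z ^ (n + 1) + 1‖ ≤ ‖z ^ (n + 1)‖ + ‖(1:ℂ)‖ :=
        norm_add_le _ _
      _ = r ^ (n + 1) + 1 := by simp [norm_pow, hr]
    calc 2 * r ^ n = ‖2 * z ^ n‖ := by simp [norm_pow, norm_mul, hr]
    _ = ‖z ^ (n + 1) + 1‖ := by rw [h2]
    _ ≤ r ^ (n + 1) + 1 := hle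
  have heqr : r ^ (n + 1) + 1 = 2 * r ^ n := le_antisymm hB2 hA
  -- equality in triangle inequality forces z^(n+1) to be real nonneg
  set w : ℂ := z ^ (n + 1) with hw
  have habsw : ‖w‖ = r ^ (n + 1) := by rw [hw, norm_pow]
  have heq : ‖w + 1‖ = ‖w‖ + 1 := by
    rw [habsw]
    calc ‖w + 1‖ = ‖2 * z ^ n‖ := by rw [h2]
    _ = 2 * r ^ n := by simp [norm_pow, norm_mul, hr]
    _ = r ^ (n + 1) + 1 := heqr.symm
  have hre : w.re = ‖w‖ := by
    have hsq : (‖w + 1‖) ^ 2 = (‖w‖ + 1) ^ 2 := by rw [heq]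
    rw [Complex.sq_norm, Complex.normSq_add] at hsq
    simp only [map_one, mul_one, Complex.normSq_one, Complex.one_re] at hsq
    rw [← Complex.sq_norm w] at hsq
    nlinarith [hsq]
  have him : w.im = 0 := by
    have habs : |w.re| = ‖w‖ := by
      rw [hre, abs_of_nonneg (norm_nonneg w)]
    exact Complex.abs_re_eq_norm.mp habs
  have hwre : w = ((r ^ (n + 1) : ℝ) : ℂ) := by
    apply Complex.ext
    · rw [Complex.ofReal_re]; exact hre.trans habsw
    · rw [Complex.ofReal_im]; exact him
  -- z^n is real
  have hzn : z ^ n = ((r ^ n : ℝ) : ℂ) := by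
    have h4 : (2:ℂ) * z ^ n = 2 * ((r ^ n : ℝ) : ℂ) := by
      rw [← h2, hwre]
      have hc := congrArg (fun t : ℝ => (t : ℂ)) heqr
      push_cast at hc ⊢
      exact_mod_cast heqr
    exact mul_left_cancel₀ two_ne_zero h4
  -- z = r
  have hzr : z = ((r : ℝ) : ℂ) := by
    have h1 : z * z ^ n = ((r : ℝ) : ℂ) * ((r ^ n : ℝ) : ℂ) := by
      rw [← pow_succ', ← hw, hwre]
      push_cast
      ring
    rw [hzn] at h1
    have hne : ((r ^ n : ℝ) : ℂ) ≠ 0 := by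
      simp only [ne_eq, Complex.ofReal_eq_zero]
      exact ne_of_gt hrn
    exact mul_right_cancel₀ hne h1
  -- r is a real root
  have hrroot : r ^ n = ∑ i ∈ Finset.range n, r ^ i := by
    have hz' := hz
    rw [hzr] at hz'
    push_cast at hz'
    exact_mod_cast hz'
  -- r ≠ 1
  have hr1' : 1 < r := by
    rcases eq_or_lt_of_le hr1 with h | h
    · exfalso
      rw [← h] at hrroot
      simp only [one_pow, Finset.sum_const, Finset.card_range, nsmul_eq_mul, mul_one]
        at hrroot
      have : (n : ℝ) = 1 := hrroot.symm
      have : n = 1 := by exact_mod_cast this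
      omega
    · exact h
  -- uniqueness: r = lam
  have hFr := aux_inv_sum_eq_one n r hr1' hrroot
  have hFl := aux_inv_sum_eq_one n lam hlam hroot
  have hnr : (Finset.range n).Nonempty := by
    apply Finset.nonempty_range_iff.mpr; omega
  have hrlam : r = lam := by
    rcases lt_trichotomy r lam with h | h | h
    · exfalso
      have hinv : lam⁻¹ < r⁻¹ := by
        exact inv_strictAnti₀ hr0 h
      have hlt : ∑ i ∈ Finset.range n, (lam⁻¹) ^ (i + 1) <
          ∑ i ∈ Finset.range n, (r⁻¹) ^ (i + 1) := by
        apply Finset.sum_lt_sum_of_nonempty hnr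
        intro i _
        exact pow_lt_pow_left₀ hinv (le_of_lt (inv_pos.mpr (lt_trans one_pos hlam))) (by omega)
      rw [hFr, hFl] at hlt
      exact lt_irrefl 1 hlt
    · exact h
    · exfalso
      have hinv : r⁻¹ < lam⁻¹ := by
        exact inv_strictAnti₀ (lt_trans one_pos hlam) h
      have hlt : ∑ i ∈ Finset.range n, (r⁻¹) ^ (i + 1) <
          ∑ i ∈ Finset.range n, (lam⁻¹) ^ (i + 1) := by
        apply Finset.sum_lt_sum_of_nonempty hnr
        intro i _
        exact pow_lt_pow_left₀ hinv (le_of_lt (inv_pos.mpr hr0)) (by omega)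
      rw [hFr, hFl] at hlt
      exact lt_irrefl 1 hlt
  exact hzlam (by rw [hzr, hrlam])
end

section
/- Let A be a real square matrix with nonnegative entries such that some power of A has strictly positive entries (A is primitive), and suppose A x⃗ = t x⃗ for some nonzero vector x⃗ with nonnegative entries and some real t > 0. Then t equals the Perron–Frobenius eigenvalue of A, i.e., t is the spectral radius of A. -/
open Matrix

lemma charpoly_eval_eq_det {r : ℕ} {𝕜 : Type*} [Field 𝕜] (B : Matrix (Fin r) (Fin r) 𝕜)
    (μ : 𝕜) : B.charpoly.eval μ = (μ • (1 : Matrix (Fin r) (Fin r) 𝕜) - B).det := by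
  rw [Matrix.charpoly, ← Polynomial.coe_evalRingHom, RingHom.map_det]
  congr 1
  ext i j
  by_cases h : i = j
  · subst h
    simp [Matrix.charmatrix_apply_eq, Matrix.one_apply]
  · simp [Matrix.charmatrix_apply_ne _ _ _ h, Matrix.one_apply, h]

lemma charpoly_isRoot_iff {r : ℕ} {𝕜 : Type*} [Field 𝕜] (B : Matrix (Fin r) (Fin r) 𝕜)
    (μ : 𝕜) : B.charpoly.IsRoot μ ↔ ∃ v, v ≠ 0 ∧ B.mulVec v = μ • v := by
  rw [Polynomial.IsRoot, charpoly_eval_eq_det, ← Matrix.exists_mulVec_eq_zero_iff]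
  constructor
  · rintro ⟨v, hv, hve⟩
    refine ⟨v, hv, ?_⟩
    have := hve
    rw [Matrix.sub_mulVec, Matrix.smul_mulVec, Matrix.one_mulVec, sub_eq_zero] at this
    exact this.symm
  · rintro ⟨v, hv, hve⟩
    refine ⟨v, hv, ?_⟩
    rw [Matrix.sub_mulVec, Matrix.smul_mulVec, Matrix.one_mulVec, hve, sub_self]

theorem perron_frobenius_eigenvalue_of_nonneg_eigenvector
    (r : ℕ) (A : Matrix (Fin r) (Fin r) ℝ)
    (hA : ∀ i j, 0 ≤ A i j) (hprim : ∃ k : ℕ, ∀ i j, 0 < (A ^ k) i j)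
    (x : Fin r → ℝ) (hx0 : x ≠ 0) (hxnn : ∀ i, 0 ≤ x i)
    (t : ℝ) (ht : 0 < t) (heig : A.mulVec x = t • x) :
    (A.map (Complex.ofReal)).charpoly.IsRoot (t : ℂ) ∧
      ∀ z : ℂ, (A.map (Complex.ofReal)).charpoly.IsRoot z → ‖z‖ ≤ t := by
  -- basics
  have hpow_nn : ∀ n : ℕ, ∀ i j, 0 ≤ (A ^ n) i j := by
    intro n
    induction n with
    | zero => intro i j; by_cases h : i = j <;> simp [Matrix.one_apply, h]
    | succ n ih =>
      intro i j
      rw [pow_succ, Matrix.mul_apply]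
      exact Finset.sum_nonneg fun l _ => mul_nonneg (ih i l) (hA l j)
  have hpow_eig : ∀ n : ℕ, (A ^ n).mulVec x = (t ^ n) • x := by
    intro n
    induction n with
    | zero => simp
    | succ n ih =>
      rw [pow_succ, ← Matrix.mulVec_mulVec, heig, Matrix.mulVec_smul, ih, smul_smul,
        pow_succ]
      ring_nf
  -- x is strictly positive
  obtain ⟨i0, hi0⟩ : ∃ i, 0 < x i := by
    by_contra h
    push_neg at h
    exact hx0 (funext fun i => le_antisymm (h i) (hxnn i))
  obtain ⟨k, hk⟩ := hprim
  have hxpos : ∀ i, 0 < x i := by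
    intro i
    have h1 : ((A ^ k).mulVec x) i = t ^ k * x i := by
      rw [hpow_eig k]; simp
    have h2 : 0 < ((A ^ k).mulVec x) i := by
      rw [Matrix.mulVec, dotProduct]
      have : (0:ℝ) < (A ^ k) i i0 * x i0 := mul_pos (hk i i0) hi0
      refine Finset.sum_pos' (fun j _ => mul_nonneg (hpow_nn k i j) (hxnn j)) ⟨i0, Finset.mem_univ _, this⟩
    have htk : (0:ℝ) < t ^ k := pow_pos ht k
    nlinarith [h1 ▸ h2]
  -- Part 1
  have hA_root : A.charpoly.IsRoot t := by
    rw [charpoly_isRoot_iff]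
    exact ⟨x, hx0, heig⟩
  have part1 : (A.map (Complex.ofReal)).charpoly.IsRoot (t : ℂ) := by
    rw [show A.map Complex.ofReal = A.map (Complex.ofRealHom : ℝ →+* ℂ) from rfl,
      Matrix.charpoly_map, Polynomial.IsRoot, Polynomial.eval_map,
      show ((t:ℂ)) = Complex.ofRealHom t from rfl, Polynomial.eval₂_at_apply, hA_root]
    simp
  refine ⟨part1, ?_⟩
  -- Part 2
  intro z hz
  rw [charpoly_isRoot_iff] at hz
  obtain ⟨v, hv0, hve⟩ := hz
  set w : Fin r → ℝ := fun i => ‖v i‖ with hw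
  have hwnn : ∀ i, 0 ≤ w i := fun i => norm_nonneg _
  obtain ⟨j0, hj0⟩ : ∃ j, 0 < w j := by
    by_contra h
    push_neg at h
    refine hv0 (funext fun j => ?_)
    exact norm_eq_zero.mp (le_antisymm (h j) (hwnn j))
  -- |z| * w ≤ A w entrywise
  have hstep : ∀ i, ‖z‖ * w i ≤ (A.mulVec w) i := by
    intro i
    have h1 : (z * v i) = ∑ j, (A i j : ℂ) * v j := by
      have h := congrFun hve i
      simp only [Matrix.mulVec, dotProduct, Matrix.map_apply, Pi.smul_apply,
        smul_eq_mul] at h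
      exact h.symm
    calc ‖z‖ * w i = ‖z * v i‖ := by
          rw [norm_mul]
      _ = ‖∑ j, (A i j : ℂ) * v j‖ := by rw [h1]
      _ ≤ ∑ j, ‖(A i j : ℂ) * v j‖ := norm_sum_le _ _
      _ = ∑ j, A i j * w j := by
          refine Finset.sum_congr rfl fun j _ => ?_
          rw [norm_mul, Complex.norm_of_nonneg (hA i j)]
      _ = (A.mulVec w) i := by rw [Matrix.mulVec, dotProduct]
  -- monotonicity of mulVec by nonneg matrices
  have hmono : ∀ (M : Matrix (Fin r) (Fin r) ℝ), (∀ i j, 0 ≤ M i j) →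
      ∀ (u u' : Fin r → ℝ), (∀ j, u j ≤ u' j) → ∀ i, (M.mulVec u) i ≤ (M.mulVec u') i := by
    intro M hM u u' huu i
    rw [Matrix.mulVec, Matrix.mulVec, dotProduct, dotProduct]
    exact Finset.sum_le_sum fun j _ => mul_le_mul_of_nonneg_left (huu j) (hM i j)
  -- iterate: |z|^n w ≤ A^n w
  have hiter : ∀ n : ℕ, ∀ i, ‖z‖ ^ n * w i ≤ ((A ^ n).mulVec w) i := by
    intro n
    induction n with
    | zero => intro i; simp [Matrix.one_mulVec]
    | succ n ih =>
      intro i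
      have h1 : ((A ^ (n + 1)).mulVec w) i = (A.mulVec ((A ^ n).mulVec w)) i := by
        rw [pow_succ', ← Matrix.mulVec_mulVec]
      rw [h1]
      have h2 : (A.mulVec (fun j => ‖z‖ ^ n * w j)) i
          ≤ (A.mulVec ((A ^ n).mulVec w)) i := hmono A hA _ _ (fun j => ih j) i
      have h3 : (A.mulVec (fun j => ‖z‖ ^ n * w j)) i
          = ‖z‖ ^ n * (A.mulVec w) i := by
        rw [Matrix.mulVec, Matrix.mulVec, dotProduct, dotProduct,
          Finset.mul_sum]
        exact Finset.sum_congr rfl fun j _ => by ring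
      have h4 : ‖z‖ ^ (n + 1) * w i
          ≤ ‖z‖ ^ n * (A.mulVec w) i := by
        rw [pow_succ]
        have := hstep i
        have hzn : (0:ℝ) ≤ ‖z‖ ^ n := pow_nonneg (norm_nonneg _) n
        calc ‖z‖ ^ n * ‖z‖ * w i
            = ‖z‖ ^ n * (‖z‖ * w i) := by ring
          _ ≤ ‖z‖ ^ n * (A.mulVec w) i := mul_le_mul_of_nonneg_left this hzn
      linarith [h3 ▸ h2]
  -- bound w by c • x
  have hr : Nonempty (Fin r) := ⟨j0⟩
  set c : ℝ := Finset.univ.sup' (Finset.univ_nonempty) (fun j => w j / x j) with hc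
  have hwcx : ∀ j, w j ≤ c * x j := by
    intro j
    have h1 : w j / x j ≤ c := Finset.le_sup' (fun j => w j / x j) (Finset.mem_univ j)
    have h2 := hxpos j
    rw [div_le_iff₀ h2] at h1
    linarith
  -- final bound
  have hbound : ∀ n : ℕ, ‖z‖ ^ n * w j0 ≤ c * (t ^ n * x j0) := by
    intro n
    have h1 := hiter n j0
    have h2 : ((A ^ n).mulVec w) j0 ≤ ((A ^ n).mulVec (fun j => c * x j)) j0 :=
      hmono (A ^ n) (hpow_nn n) _ _ hwcx j0
    have h3 : ((A ^ n).mulVec (fun j => c * x j)) j0 = c * (t ^ n * x j0) := by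
      have h4 : (fun j => c * x j) = c • x := by funext j; simp
      rw [h4, Matrix.mulVec_smul, hpow_eig n]
      simp only [Pi.smul_apply, smul_eq_mul]
    linarith [h3 ▸ h2]
  by_contra hzt
  push_neg at hzt
  have ha : 1 < ‖z‖ / t := (one_lt_div ht).mpr hzt
  obtain ⟨n, hn⟩ := pow_unbounded_of_one_lt (c * x j0 / w j0) ha
  have hb := hbound n
  have htn : (0:ℝ) < t ^ n := pow_pos ht n
  rw [div_pow] at hn
  have h5 : ‖z‖ ^ n * w j0 ≤ c * x j0 * t ^ n := by linarith [hbound n]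
  have h6 : c * x j0 / w j0 * t ^ n < ‖z‖ ^ n := by
    rw [lt_div_iff₀ htn] at hn
    linarith
  have h7 : c * x j0 / w j0 * t ^ n * w j0 = c * x j0 * t ^ n := by
    field_simp
  nlinarith [h6, h5, hj0]
end

section
/- Let t be a real algebraic number such that t is an eigenvalue of a matrix of the form E Dₙ Eᵀ Dₘ with E an integer matrix and Dₙ, Dₘ positive integer diagonal matrices. Then for every embedding σ : ℚ(t) → ℂ, σ(2 + t) is real; in particular the trace 2 + t of the hyperbolic element P_h P_v generates a totally real field ℚ(2 + t) = ℚ(t). -/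
open Matrix Polynomial

lemma eig_im_zero {r s : ℕ} (E : Matrix (Fin r) (Fin s) ℤ) (n : Fin s → ℤ)
    (m : Fin r → ℤ) (hn : ∀ j, 0 < n j) (hm : ∀ i, 0 < m i) (μ : ℂ)
    (hμ : ((E * diagonal n * Eᵀ * diagonal m).map (Int.cast : ℤ → ℂ)).charpoly.IsRoot μ) :
    μ.im = 0 := by
  set M := (E * diagonal n * Eᵀ * diagonal m).map (Int.cast : ℤ → ℂ) with hM
  -- find an eigenvector
  have hdet : ((charmatrix M).map (evalRingHom μ)).det = 0 := by
    have h := hμ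
    rw [Polynomial.IsRoot, Matrix.charpoly] at h
    rw [← RingHom.mapMatrix_apply, ← RingHom.map_det]
    exact h
  obtain ⟨v, hv0, hv⟩ := Matrix.exists_mulVec_eq_zero_iff.2 hdet
  have hmat : (charmatrix M).map (evalRingHom μ) = diagonal (fun _ => μ) - M := by
    ext i j
    by_cases h : i = j
    · subst h; simp
    · simp [h, charmatrix_apply_ne _ _ _ h, Matrix.diagonal_apply_ne _ h]
  have hMv : M *ᵥ v = μ • v := by
    rw [hmat, sub_mulVec, sub_eq_zero] at hv
    rw [← hv]
    ext i
    simp [mulVec_diagonal]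
  -- complex matrices
  have castRH : (Int.cast : ℤ → ℂ) = ⇑(Int.castRingHom ℂ) := rfl
  set Ec : Matrix (Fin r) (Fin s) ℂ := E.map (Int.cast : ℤ → ℂ) with hEc
  set Dn : Matrix (Fin s) (Fin s) ℂ := diagonal (fun j => (n j : ℂ)) with hDn
  set Dm : Matrix (Fin r) (Fin r) ℂ := diagonal (fun i => (m i : ℂ)) with hDm
  have hMdec : M = Ec * Dn * Ecᵀ * Dm := by
    rw [hM, castRH, Matrix.map_mul, Matrix.map_mul, Matrix.map_mul, Matrix.transpose_map,
      Matrix.diagonal_map (by simp), Matrix.diagonal_map (by simp)]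
    rfl
  set C : Matrix (Fin s) (Fin r) ℂ := Ecᵀ * Dm with hC
  have hfact : Dm * M = Cᵀ * Dn * C := by
    rw [hMdec, hC, Matrix.transpose_mul, Matrix.transpose_transpose, Matrix.diagonal_transpose]
    simp only [Matrix.mul_assoc]
    rfl
  -- conjugation-compatibility of C
  have hCreal : ∀ j i, (starRingEnd ℂ) (C j i) = C j i := by
    intro j i
    simp [hC, Matrix.mul_apply, map_sum, hEc, hDm, Matrix.diagonal_apply, apply_ite]
  set w : Fin s → ℂ := C *ᵥ v with hw
  have hCstar : C *ᵥ (star v) = star w := by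
    funext j
    simp only [hw, Matrix.mulVec, dotProduct, Pi.star_apply, star_sum, star_mul']
    refine Finset.sum_congr rfl fun i _ => ?_
    rw [show star (C j i) = (starRingEnd ℂ) (C j i) from rfl, hCreal]
  -- the two sides of the quadratic form identity
  have key : star v ⬝ᵥ ((Dm * M) *ᵥ v) = μ * (star v ⬝ᵥ (Dm *ᵥ v)) := by
    rw [← Matrix.mulVec_mulVec, hMv, Matrix.mulVec_smul, dotProduct_smul]
    rfl
  have key2 : star v ⬝ᵥ ((Dm * M) *ᵥ v) = star w ⬝ᵥ (Dn *ᵥ w) := by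
    rw [hfact, ← Matrix.mulVec_mulVec, ← Matrix.mulVec_mulVec,
      Matrix.dotProduct_mulVec, Matrix.vecMul_transpose, hCstar]
  -- realness of both quadratic forms
  have hQ : (star w ⬝ᵥ (Dn *ᵥ w)).im = 0 := by
    simp only [dotProduct, hDn, Matrix.mulVec_diagonal, Pi.star_apply, Complex.im_sum]
    refine Finset.sum_eq_zero fun j _ => ?_
    rw [show (star (w j) * ((n j : ℂ) * w j)) = (n j : ℂ) * (star (w j) * w j) by ring,
      Complex.star_def, ← Complex.normSq_eq_conj_mul_self]
    simp
  obtain ⟨S, hSpos, hS⟩ : ∃ S : ℝ, 0 < S ∧ star v ⬝ᵥ (Dm *ᵥ v) = (S : ℂ) := by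
    refine ⟨∑ i, (m i : ℝ) * Complex.normSq (v i), ?_, ?_⟩
    · obtain ⟨i0, hi0⟩ := Function.ne_iff.1 hv0
      refine Finset.sum_pos' (fun i _ => ?_) ⟨i0, Finset.mem_univ _, ?_⟩
      · exact mul_nonneg (by exact_mod_cast (hm i).le) (Complex.normSq_nonneg _)
      · exact mul_pos (by exact_mod_cast hm i0) (Complex.normSq_pos.2 hi0)
    · simp only [dotProduct, hDm, Matrix.mulVec_diagonal, Pi.star_apply, Complex.ofReal_sum]
      refine Finset.sum_congr rfl fun i _ => ?_
      rw [show (star (v i) * ((m i : ℂ) * v i)) = (m i : ℂ) * (star (v i) * v i) by ring,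
        Complex.star_def, ← Complex.normSq_eq_conj_mul_self]
      push_cast
      ring
  have : (μ * (S : ℂ)).im = 0 := by
    rw [← hS, ← key, key2]
    exact hQ
  rw [Complex.mul_im, Complex.ofReal_re, Complex.ofReal_im, mul_zero, zero_add] at this
  exact (mul_eq_zero.1 this).resolve_right hSpos.ne'

theorem trace_field_of_thurston_veech_hyperbolic_totally_real
    (t : ℝ)
    (ht : ∃ (r s : ℕ) (E : Matrix (Fin r) (Fin s) ℤ) (n : Fin s → ℤ) (m : Fin r → ℤ),
      (∀ j, 0 < n j) ∧ (∀ i, 0 < m i) ∧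
      ((E * diagonal n * Eᵀ * diagonal m).map (Int.cast : ℤ → ℝ)).charpoly.IsRoot t) :
    (∀ z : ℂ, Polynomial.aeval z (minpoly ℚ (2 + t)) = 0 → z.im = 0) ∧
      IntermediateField.adjoin ℚ {(2 + t : ℝ)} = IntermediateField.adjoin ℚ {t} := by
  obtain ⟨r, s, E, n, m, hn, hm, hroot⟩ := ht
  set A : Matrix (Fin r) (Fin r) ℤ := E * diagonal n * Eᵀ * diagonal m with hA
  set p : Polynomial ℤ := A.charpoly with hp
  -- t is a root of p over ℝ, hence of p over ℚ
  have hpt : Polynomial.aeval t p = 0 := by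
    have h1 : (A.map (Int.cast : ℤ → ℝ)).charpoly = p.map (Int.castRingHom ℝ) :=
      Matrix.charpoly_map A (Int.castRingHom ℝ)
    have := hroot
    rw [h1] at this
    rwa [Polynomial.aeval_def, ← Polynomial.eval_map]
  have haevalq : Polynomial.aeval t (p.map (Int.castRingHom ℚ)) = 0 := by
    rw [show (Int.castRingHom ℚ) = algebraMap ℤ ℚ from rfl,
      Polynomial.aeval_map_algebraMap]
    exact hpt
  have hqmonic : (p.map (Int.castRingHom ℚ)).Monic :=
    (A.charpoly_monic).map _
  have hdvd : minpoly ℚ t ∣ p.map (Int.castRingHom ℚ) := minpoly.dvd ℚ t haevalq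
  constructor
  · intro z hz
    have h2t : (2 : ℝ) + t = t + algebraMap ℚ ℝ 2 := by
      simp [add_comm]
    rw [h2t, minpoly.add_algebraMap] at hz
    rw [Polynomial.aeval_comp] at hz
    have hz2 : Polynomial.aeval (z - 2) (minpoly ℚ t) = 0 := by
      have : (Polynomial.aeval z) (Polynomial.X - Polynomial.C (2:ℚ)) = z - 2 := by
        simp
      rwa [this] at hz
    -- z - 2 is a root of p over ℂ
    have hzp : Polynomial.aeval (z - 2) p = 0 := by
      obtain ⟨c, hc⟩ := hdvd
      have : Polynomial.aeval (z - 2) (p.map (Int.castRingHom ℚ)) = 0 := by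
        rw [hc, _root_.map_mul, hz2, zero_mul]
      rwa [show (Int.castRingHom ℚ) = algebraMap ℤ ℚ from rfl,
        Polynomial.aeval_map_algebraMap] at this
    have hroot2 : ((A.map (Int.cast : ℤ → ℂ)).charpoly).IsRoot (z - 2) := by
      have h3 : (A.map (Int.cast : ℤ → ℂ)).charpoly = p.map (Int.castRingHom ℂ) :=
        Matrix.charpoly_map A (Int.castRingHom ℂ)
      rw [h3, Polynomial.IsRoot, Polynomial.eval_map,
        show Int.castRingHom ℂ = algebraMap ℤ ℂ from (algebraMap_int_eq ℂ).symm,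
        ← Polynomial.aeval_def]
      exact hzp
    have him := eig_im_zero E n m hn hm (z - 2) hroot2
    simpa using him
  · apply le_antisymm
    · rw [IntermediateField.adjoin_le_iff]
      intro x hx
      rw [Set.mem_singleton_iff] at hx
      rw [hx]
      have h2mem : (2:ℝ) ∈ IntermediateField.adjoin ℚ {t} := by
        rw [show (2:ℝ) = 1 + 1 by norm_num]
        exact add_mem (one_mem _) (one_mem _)
      exact add_mem h2mem (IntermediateField.mem_adjoin_simple_self ℚ t)
    · rw [IntermediateField.adjoin_le_iff]
      intro x hx
      rw [Set.mem_singleton_iff] at hx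
      rw [hx]
      have h2mem : (2:ℝ) ∈ IntermediateField.adjoin ℚ {(2 + t : ℝ)} := by
        rw [show (2:ℝ) = 1 + 1 by norm_num]
        exact add_mem (one_mem _) (one_mem _)
      have hsub := sub_mem (IntermediateField.mem_adjoin_simple_self ℚ (2 + t)) h2mem
      rwa [add_sub_cancel_left] at hsub
end
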